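/- (Part of Theorem 6.1.) Let (D1, M) be a consistent periodic first-derivative SBP operator with diagonal mass matrix (M symmetric positive definite and diagonal, M·D1 + D1ᵀ·M = 0, D1·𝟙 = 0). Let ρ ∈ ℝ^m have strictly positive components and K ∈ ℝ^m have strictly positive components; define the pointwise stress σ(ε)ᵢ = exp(Kᵢ·εᵢ) − 1 for ε ∈ ℝ^m. Let ε, u : ℝ → ℝ^m be differentiable and satisfy the semidiscretized p-system ∂ₜε = D1·u, ∂ₜuᵢ = ρᵢ⁻¹·(D1·σ(ε))ᵢ for all t and all i. Then the discrete total mass of ε, namely 𝟙ᵀ·M·ε(t), is constant in t. -/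

import Mathlib

open Matrix

lemma aux_dot_zero {m : ℕ} (D1 M : Matrix (Fin m) (Fin m) ℝ)
    (hD1 : M * D1 + D1ᵀ * M = 0)
    (hD1cons : D1 *ᵥ (1 : Fin m → ℝ) = 0) (w : Fin m → ℝ) :
    (1 : Fin m → ℝ) ⬝ᵥ (M *ᵥ (D1 *ᵥ w)) = 0 := by
  have hMD : M * D1 = -(D1ᵀ * M) := by
    have h := hD1
    rw [add_eq_zero_iff_eq_neg] at h
    exact h
  calc (1 : Fin m → ℝ) ⬝ᵥ (M *ᵥ (D1 *ᵥ w))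
      = (1 : Fin m → ℝ) ⬝ᵥ ((M * D1) *ᵥ w) := by rw [Matrix.mulVec_mulVec]
    _ = (1 : Fin m → ℝ) ⬝ᵥ (-((D1ᵀ * M) *ᵥ w)) := by rw [hMD, Matrix.neg_mulVec]
    _ = -((1 : Fin m → ℝ) ⬝ᵥ (D1ᵀ *ᵥ (M *ᵥ w))) := by
        rw [dotProduct_neg, Matrix.mulVec_mulVec]
    _ = -(((1 : Fin m → ℝ) ᵥ* D1ᵀ) ⬝ᵥ (M *ᵥ w)) := by rw [Matrix.dotProduct_mulVec]
    _ = -((D1 *ᵥ (1 : Fin m → ℝ)) ⬝ᵥ (M *ᵥ w)) := by rw [Matrix.vecMul_transpose]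
    _ = 0 := by rw [hD1cons, zero_dotProduct, neg_zero]

lemma aux_dot_eq {m : ℕ} (M : Matrix (Fin m) (Fin m) ℝ) (v : Fin m → ℝ) :
    (1 : Fin m → ℝ) ⬝ᵥ (M *ᵥ v) = ∑ j, (∑ i, M i j) * v j := by
  simp only [dotProduct, Matrix.mulVec, Pi.one_apply, one_mul]
  rw [Finset.sum_comm]
  simp [Finset.sum_mul]

theorem p_system_conserves_total_mass_of_strain
    (m : ℕ) (D1 M : Matrix (Fin m) (Fin m) ℝ)
    (hM : M.PosDef) (hMdiag : M.IsDiag)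
    (hD1 : M * D1 + D1ᵀ * M = 0)
    (hD1cons : D1 *ᵥ (1 : Fin m → ℝ) = 0)
    (ρ K : Fin m → ℝ)
    (hρ : ∀ i, 0 < ρ i) (hK : ∀ i, 0 < K i)
    (ε u : ℝ → Fin m → ℝ)
    (hε : ∀ t, HasDerivAt ε (D1 *ᵥ u t) t)
    (hu : ∀ t, HasDerivAt u
      (fun i => (ρ i)⁻¹ * (D1 *ᵥ (fun j => Real.exp (K j * ε t j) - 1)) i) t) :
    ∀ t₁ t₂ : ℝ,
      (1 : Fin m → ℝ) ⬝ᵥ (M *ᵥ ε t₁) = (1 : Fin m → ℝ) ⬝ᵥ (M *ᵥ ε t₂) := by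
  have key : ∀ t : ℝ, HasDerivAt (fun s => (1 : Fin m → ℝ) ⬝ᵥ (M *ᵥ ε s)) 0 t := by
    intro t
    have hcomp : ∀ j : Fin m, HasDerivAt (fun s => ε s j) ((D1 *ᵥ u t) j) t := by
      intro j
      exact (ContinuousLinearMap.proj (R := ℝ) (φ := fun _ : Fin m => ℝ)
        j).hasFDerivAt.comp_hasDerivAt t (hε t)
    have h1 : HasDerivAt (fun s => (1 : Fin m → ℝ) ⬝ᵥ (M *ᵥ ε s))
        ((1 : Fin m → ℝ) ⬝ᵥ (M *ᵥ (D1 *ᵥ u t))) t := by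
      simp only [aux_dot_eq]
      exact HasDerivAt.fun_sum fun j _ => (hcomp j).const_mul _
    rwa [aux_dot_zero D1 M hD1 hD1cons (u t)] at h1
  intro t₁ t₂
  exact is_const_of_deriv_eq_zero (f := fun s => (1 : Fin m → ℝ) ⬝ᵥ (M *ᵥ ε s))
    (fun t => (key t).differentiableAt) (fun t => (key t).deriv) t₁ t₂
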